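/- arXiv:2509.01340 — 2 statements merged into one kernel-verified Lean document; each statement's English description precedes it below -/
import Mathlib

section
/- Let X be a compact metric space and f : X → X continuous. Suppose for every n ∈ ℕ there is a finite family Hₙ of subsets of X, each with nonempty interior, whose union is X and with all members of Hₙ of diameter less than 2^{-n}, such that for all F, H ∈ Hₙ there exists k₀ with f^[k](F) ∩ H ≠ ∅ for every k ≥ k₀. Then f is topologically mixing. -/
theorem mixing_of_small_covers {X : Type*} [MetricSpace X] [CompactSpace X]
    (f : X → X) (hf : Continuous f)
    (hcov : ∀ n : ℕ, ∃ H : Finset (Set X),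
      (∀ F ∈ H, (interior F).Nonempty ∧ Metric.diam F < (2 : ℝ)⁻¹ ^ n) ∧
      (⋃₀ (H : Set (Set X))) = Set.univ ∧
      (∀ F ∈ H, ∀ G ∈ H, ∃ k₀ : ℕ, ∀ k ≥ k₀, (f^[k] '' F ∩ G).Nonempty)) :
    ∀ U V : Set X, IsOpen U → IsOpen V → U.Nonempty → V.Nonempty →
      ∃ N : ℕ, ∀ n ≥ N, (f^[n] '' U ∩ V).Nonempty := by
  intro U V hU hV ⟨x, hx⟩ ⟨y, hy⟩
  obtain ⟨εU, hεU, hballU⟩ := Metric.isOpen_iff.mp hU x hx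
  obtain ⟨εV, hεV, hballV⟩ := Metric.isOpen_iff.mp hV y hy
  set ε := min εU εV with hε
  have hεpos : 0 < ε := lt_min hεU hεV
  obtain ⟨n, hn⟩ := exists_pow_lt_of_lt_one hεpos (by norm_num : (2:ℝ)⁻¹ < 1)
  obtain ⟨H, hdiam, hcover, hmix⟩ := hcov n
  obtain ⟨F, hFH, hxF⟩ : ∃ F ∈ H, x ∈ F := by
    have : x ∈ ⋃₀ (H : Set (Set X)) := hcover ▸ Set.mem_univ x
    simpa using this
  obtain ⟨G, hGH, hyG⟩ : ∃ G ∈ H, y ∈ G := by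
    have : y ∈ ⋃₀ (H : Set (Set X)) := hcover ▸ Set.mem_univ y
    simpa using this
  have hFU : F ⊆ U := by
    intro z hz
    apply hballU
    have : dist z x ≤ Metric.diam F :=
      Metric.dist_le_diam_of_mem (Metric.isBounded_of_compactSpace) hz hxF
    exact lt_of_le_of_lt this (((hdiam F hFH).2.trans_le hn.le).trans_le (min_le_left _ _))
  have hGV : G ⊆ V := by
    intro z hz
    apply hballV
    have : dist z y ≤ Metric.diam G :=
      Metric.dist_le_diam_of_mem (Metric.isBounded_of_compactSpace) hz hyG
    exact lt_of_le_of_lt this (((hdiam G hGH).2.trans_le hn.le).trans_le (min_le_right _ _))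
  obtain ⟨k₀, hk₀⟩ := hmix F hFH G hGH
  exact ⟨k₀, fun k hk => (hk₀ k hk).mono (Set.inter_subset_inter (Set.image_mono hFU) hGV)⟩
end

section
/- Let X be a compact metric space and f : X → X continuous and chain transitive, and suppose X is connected. Then f is chain mixing: for every δ > 0 there exists N ∈ ℕ such that for every n ≥ N and every x, y ∈ X there exists a δ-chain of f from x to y of length exactly n. -/
namespace ChainMix

variable {X : Type*} [MetricSpace X] (f : X → X) (δ : ℝ)

/-- There is a δ-chain of f from x to y of length exactly n. -/
def Chn (n : ℕ) (x y : X) : Prop :=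
  ∃ c : ℕ → X, c 0 = x ∧ c n = y ∧ ∀ i < n, dist (f (c i)) (c (i + 1)) < δ

variable {f δ}

lemma chn_refl (x : X) : Chn f δ 0 x x :=
  ⟨fun _ => x, rfl, rfl, fun i hi => absurd hi (by omega)⟩

lemma chn_single {x y : X} (h : dist (f x) y < δ) : Chn f δ 1 x y :=
  ⟨fun i => if i = 0 then x else y, by simp, by simp, by
    intro i hi
    have : i = 0 := by omega
    simp [this, h]⟩

lemma chn_trans {m n : ℕ} {x y z : X} (h1 : Chn f δ m x y) (h2 : Chn f δ n y z) :
    Chn f δ (m + n) x z := by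
  obtain ⟨c, hc0, hcm, hc⟩ := h1
  obtain ⟨d, hd0, hdn, hd⟩ := h2
  refine ⟨fun i => if i ≤ m then c i else d (i - m), by simp [hc0], ?_, ?_⟩
  · by_cases h : n = 0
    · subst h
      simp only [Nat.add_zero, le_refl, if_pos]
      rw [hcm, ← hd0, hdn]
    · have h1 : ¬ (m + n ≤ m) := by omega
      simp only [h1, if_neg, if_false]
      rw [Nat.add_sub_cancel_left, hdn]
  · intro i hi
    by_cases h : i + 1 ≤ m
    · have h' : i ≤ m := by omega
      simp only [h, h', if_pos]
      exact hc i (by omega)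
    · have h2 : ¬ (i + 1 ≤ m) := h
      simp only [h2, if_false]
      by_cases h3 : i ≤ m
      · have : i = m := by omega
        subst this
        simp only [le_refl, if_pos]
        rw [hcm, ← hd0]
        have := hd 0 (by omega)
        simpa using this
      · simp only [h3, if_false]
        have h4 : i + 1 - m = (i - m) + 1 := by omega
        rw [h4]
        exact hd (i - m) (by omega)

/-- Openness in the last point. -/
lemma chn_last_open {n : ℕ} {x y : X} (hn : 1 ≤ n) (h : Chn f δ n x y) :
    ∃ ε > (0:ℝ), ∀ y', dist y y' < ε → Chn f δ n x y' := by
  obtain ⟨c, hc0, hcn, hc⟩ := h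
  have hlt := hc (n - 1) (by omega)
  have hn1 : n - 1 + 1 = n := by omega
  rw [hn1, hcn] at hlt
  refine ⟨δ - dist (f (c (n - 1))) y, by linarith, fun y' hy' => ?_⟩
  refine ⟨fun i => if i = n then y' else c i, ?_, by simp, ?_⟩
  · have : ¬ (0 = n) := by omega
    simp [this, hc0]
  · intro i hi
    have hine : ¬ (i = n) := by omega
    by_cases h1 : i + 1 = n
    · simp only [hine, if_false, h1, if_pos]
      have h2 : i = n - 1 := by omega
      subst h2
      calc dist (f (c (n-1))) y' ≤ dist (f (c (n-1))) y + dist y y' := dist_triangle _ _ _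
        _ < δ := by linarith
    · simp only [hine, if_false, h1]
      exact hc i hi

/-- Openness in the first point, using continuity of f. -/
lemma chn_first_open (hf : Continuous f) {n : ℕ} {x y : X} (hn : 1 ≤ n) (h : Chn f δ n x y) :
    ∃ ε > (0:ℝ), ∀ x', dist x' x < ε → Chn f δ n x' y := by
  obtain ⟨c, hc0, hcn, hc⟩ := h
  have hlt := hc 0 (by omega)
  rw [hc0] at hlt
  obtain ⟨ε, hε, hfε⟩ := Metric.continuous_iff.1 hf x (δ - dist (f x) (c 1)) (by linarith)
  refine ⟨ε, hε, fun x' hx' => ?_⟩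
  refine ⟨fun i => if i = 0 then x' else c i, by simp, ?_, ?_⟩
  · have : ¬ (n = 0) := by omega
    simp [this, hcn]
  · intro i hi
    by_cases h1 : i = 0
    · subst h1
      have h2 : ¬ (0 + 1 = 0) := by omega
      simp only [if_pos, h2, if_false]
      have := hfε x' hx'
      calc dist (f x') (c (0+1)) ≤ dist (f x') (f x) + dist (f x) (c 1) := dist_triangle _ _ _
        _ < δ := by linarith
    · have h2 : ¬ (i + 1 = 0) := by omega
      simp only [h1, h2, if_false]
      exact hc i hi

lemma consecutive_of_gcd (S : Set ℕ) (hadd : ∀ a ∈ S, ∀ b ∈ S, a + b ∈ S)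
    (hm : ∀ m : ℕ, (∀ n ∈ S, m ∣ n) → m ∣ 1) :
    ∃ B, B ∈ insert 0 S ∧ B + 1 ∈ insert 0 S := by
  have hadd' : ∀ a ∈ insert 0 S, ∀ b ∈ insert 0 S, a + b ∈ insert (0:ℕ) S := by
    rintro a (rfl | ha) b (rfl | hb)
    · exact Set.mem_insert _ _
    · simpa using Set.mem_insert_of_mem _ hb
    · simpa using Set.mem_insert_of_mem _ ha
    · exact Set.mem_insert_of_mem _ (hadd _ ha _ hb)
  set G : AddSubgroup ℤ := AddSubgroup.closure ((fun n : ℕ => (n : ℤ)) '' S) with hG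
  obtain ⟨a, ha⟩ := Int.subgroup_cyclic G
  have hdvd : ∀ n ∈ S, a.natAbs ∣ n := by
    intro n hn
    have : (n : ℤ) ∈ G := AddSubgroup.subset_closure ⟨n, hn, rfl⟩
    rw [ha, AddSubgroup.mem_closure_singleton] at this
    obtain ⟨k, hk⟩ := this
    have : a ∣ (n : ℤ) := ⟨k, by rw [← hk, smul_eq_mul]; ring⟩
    exact Int.ofNat_dvd.mp (Int.natAbs_dvd.mpr this)
  have ha1 : a.natAbs = 1 := Nat.dvd_one.mp (hm _ hdvd)
  have h1G : (1 : ℤ) ∈ G := by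
    rw [ha, AddSubgroup.mem_closure_singleton]
    rcases Int.natAbs_eq a with h | h
    · exact ⟨1, by rw [h, ha1]; simp⟩
    · exact ⟨-1, by rw [h, ha1]; simp⟩
  have hdec : ∀ x ∈ G, ∃ A ∈ insert 0 S, ∃ B ∈ insert 0 S, x = (A : ℤ) - B := by
    intro x hx
    rw [hG] at hx
    induction hx using AddSubgroup.closure_induction with
    | mem y hy =>
      obtain ⟨n, hn, rfl⟩ := hy
      exact ⟨n, Set.mem_insert_of_mem _ hn, 0, Set.mem_insert _ _, by simp⟩
    | zero => exact ⟨0, Set.mem_insert _ _, 0, Set.mem_insert _ _, by simp⟩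
    | add y z hy hz ihy ihz =>
      obtain ⟨A, hA, B, hB, rfl⟩ := ihy
      obtain ⟨C, hC, D, hD, rfl⟩ := ihz
      exact ⟨A + C, hadd' _ hA _ hC, B + D, hadd' _ hB _ hD, by push_cast; ring⟩
    | neg y hy ihy =>
      obtain ⟨A, hA, B, hB, rfl⟩ := ihy
      exact ⟨B, hB, A, hA, by ring⟩
  obtain ⟨A, hA, B, hB, hAB⟩ := hdec 1 h1G
  have hAB' : A = B + 1 := by omega
  exact ⟨B, hB, hAB' ▸ hA⟩

/-- pumping: if B and B+1 are in an add-closed set containing 0, all n ≥ B*B are in it. -/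
lemma pump (S : Set ℕ) (h0 : 0 ∈ S) (hadd : ∀ a ∈ S, ∀ b ∈ S, a + b ∈ S)
    {B : ℕ} (hB : B ∈ S) (hB1 : B + 1 ∈ S) :
    ∀ n, B * B ≤ n → n ∈ S := by
  have hmul : ∀ k : ℕ, ∀ a ∈ S, k * a ∈ S := by
    intro k a haS
    induction k with
    | zero => simpa using h0
    | succ k ih => rw [Nat.succ_mul]; exact hadd _ ih _ haS
  intro n hn
  rcases Nat.eq_zero_or_pos B with hB0 | hB0
  · subst hB0
    simpa using hmul n 1 (by simpa using hB1)
  · obtain ⟨q, r, hrB, hn'⟩ : ∃ q r, r < B ∧ n = B * B + (B * q + r) := by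
      refine ⟨(n - B * B) / B, (n - B * B) % B, Nat.mod_lt _ hB0, ?_⟩
      have := Nat.div_add_mod (n - B * B) B
      omega
    have key : n = (B + q - r) * B + r * (B + 1) := by
      have h1 : r ≤ B + q := by omega
      zify [h1]
      zify at hn'
      linear_combination hn'
    rw [key]
    exact hadd _ (hmul _ _ hB) _ (hmul _ _ hB1)

end ChainMix

open ChainMix

theorem chainTransitive_implies_chainMixing {X : Type*} [MetricSpace X] [CompactSpace X]
    [ConnectedSpace X] (f : X → X) (hf : Continuous f)
    (hct : ∀ x y : X, ∀ δ > (0 : ℝ), ∃ n : ℕ, 1 ≤ n ∧ ∃ c : ℕ → X,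
      c 0 = x ∧ c n = y ∧ ∀ i < n, dist (f (c i)) (c (i + 1)) < δ) :
    ∀ δ > (0 : ℝ), ∃ N : ℕ, ∀ n ≥ N, ∀ x y : X, ∃ c : ℕ → X,
      c 0 = x ∧ c n = y ∧ ∀ i < n, dist (f (c i)) (c (i + 1)) < δ := by
  intro δ hδ
  have hct' : ∀ x y : X, ∃ n : ℕ, 1 ≤ n ∧ Chn f δ n x y := fun x y => hct x y δ hδ
  have x₀ : X := Classical.arbitrary X
  set R₀ : Set ℕ := {n | Chn f δ n x₀ x₀} with hR₀
  have h0 : 0 ∈ R₀ := chn_refl x₀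
  have hadd : ∀ a ∈ R₀, ∀ b ∈ R₀, a + b ∈ R₀ := fun a ha b hb => chn_trans ha hb
  -- connectedness: any common divisor of the loop lengths divides 1
  have hm : ∀ m : ℕ, (∀ n ∈ R₀, m ∣ n) → m ∣ 1 := by
    intro m hmd
    by_contra hm1
    set U : Set X := {y | ∃ n, 1 ≤ n ∧ m ∣ n ∧ Chn f δ n x₀ y} with hU
    set V : Set X := {y | ∃ n, 1 ≤ n ∧ ¬ m ∣ n ∧ Chn f δ n x₀ y} with hV
    have hUopen : IsOpen U := by
      rw [Metric.isOpen_iff]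
      rintro y ⟨n, hn1, hmn, hc⟩
      obtain ⟨ε, hε, hball⟩ := chn_last_open hn1 hc
      exact ⟨ε, hε, fun z hz => ⟨n, hn1, hmn, hball z (by rw [dist_comm]; exact hz)⟩⟩
    have hVopen : IsOpen V := by
      rw [Metric.isOpen_iff]
      rintro y ⟨n, hn1, hmn, hc⟩
      obtain ⟨ε, hε, hball⟩ := chn_last_open hn1 hc
      exact ⟨ε, hε, fun z hz => ⟨n, hn1, hmn, hball z (by rw [dist_comm]; exact hz)⟩⟩
    have hcover : (Set.univ : Set X) ⊆ U ∪ V := by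
      intro y _
      obtain ⟨n, hn1, hc⟩ := hct' x₀ y
      by_cases h : m ∣ n
      · exact Or.inl ⟨n, hn1, h, hc⟩
      · exact Or.inr ⟨n, hn1, h, hc⟩
    have hdisj : ¬ (Set.univ ∩ (U ∩ V)).Nonempty := by
      rintro ⟨y, -, ⟨n1, hn11, hmn1, hc1⟩, ⟨n2, hn21, hmn2, hc2⟩⟩
      obtain ⟨r, hr1, hcr⟩ := hct' y x₀
      have hd1 : m ∣ n1 + r := hmd _ (chn_trans hc1 hcr)
      have hd2 : m ∣ n2 + r := hmd _ (chn_trans hc2 hcr)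
      have hdr : m ∣ r := by
        have := Nat.dvd_sub hd1 hmn1
        simpa using this
      exact hmn2 (by simpa using Nat.dvd_sub hd2 hdr)
    have hx₀U : x₀ ∈ U := by
      obtain ⟨r, hr1, hcr⟩ := hct' x₀ x₀
      exact ⟨r, hr1, hmd _ hcr, hcr⟩
    have hfx₀V : f x₀ ∈ V :=
      ⟨1, le_refl _, hm1, chn_single (by simpa using hδ)⟩
    exact hdisj (isPreconnected_univ U V hUopen hVopen hcover
      ⟨x₀, Set.mem_univ _, hx₀U⟩ ⟨f x₀, Set.mem_univ _, hfx₀V⟩)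
  obtain ⟨B, hB, hB1⟩ := consecutive_of_gcd R₀ hadd hm
  rw [Set.insert_eq_self.mpr h0] at hB hB1
  have hloop : ∀ n, B * B ≤ n → n ∈ R₀ := pump R₀ h0 hadd hB hB1
  -- compactness: uniform bounds on chain lengths to and from x₀
  have hL2 : ∃ L, ∀ y : X, ∃ n, 1 ≤ n ∧ n ≤ L ∧ Chn f δ n x₀ y := by
    set W : ℕ → Set X := fun k => {y | ∃ n, 1 ≤ n ∧ n ≤ k ∧ Chn f δ n x₀ y} with hW
    have hWopen : ∀ k, IsOpen (W k) := by
      intro k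
      rw [Metric.isOpen_iff]
      rintro y ⟨n, hn1, hnk, hc⟩
      obtain ⟨ε, hε, hball⟩ := chn_last_open hn1 hc
      exact ⟨ε, hε, fun z hz => ⟨n, hn1, hnk, hball z (by rw [dist_comm]; exact hz)⟩⟩
    have hWcover : (Set.univ : Set X) ⊆ ⋃ k, W k := by
      intro y _
      obtain ⟨n, hn1, hc⟩ := hct' x₀ y
      exact Set.mem_iUnion.mpr ⟨n, n, hn1, le_refl _, hc⟩
    obtain ⟨t, ht⟩ := isCompact_univ.elim_finite_subcover W hWopen hWcover
    refine ⟨t.sup id, fun y => ?_⟩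
    have := ht (Set.mem_univ y)
    rw [Set.mem_iUnion₂] at this
    obtain ⟨k, hk, n, hn1, hnk, hc⟩ := this
    exact ⟨n, hn1, le_trans hnk (Finset.le_sup (f := id) hk), hc⟩
  have hL1 : ∃ L, ∀ x : X, ∃ n, 1 ≤ n ∧ n ≤ L ∧ Chn f δ n x x₀ := by
    set W : ℕ → Set X := fun k => {x | ∃ n, 1 ≤ n ∧ n ≤ k ∧ Chn f δ n x x₀} with hW
    have hWopen : ∀ k, IsOpen (W k) := by
      intro k
      rw [Metric.isOpen_iff]
      rintro x ⟨n, hn1, hnk, hc⟩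
      obtain ⟨ε, hε, hball⟩ := chn_first_open hf hn1 hc
      exact ⟨ε, hε, fun z hz => ⟨n, hn1, hnk, hball z hz⟩⟩
    have hWcover : (Set.univ : Set X) ⊆ ⋃ k, W k := by
      intro x _
      obtain ⟨n, hn1, hc⟩ := hct' x x₀
      exact Set.mem_iUnion.mpr ⟨n, n, hn1, le_refl _, hc⟩
    obtain ⟨t, ht⟩ := isCompact_univ.elim_finite_subcover W hWopen hWcover
    refine ⟨t.sup id, fun x => ?_⟩
    have := ht (Set.mem_univ x)
    rw [Set.mem_iUnion₂] at this
    obtain ⟨k, hk, n, hn1, hnk, hc⟩ := this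
    exact ⟨n, hn1, le_trans hnk (Finset.le_sup (f := id) hk), hc⟩
  obtain ⟨L1, hL1⟩ := hL1
  obtain ⟨L2, hL2⟩ := hL2
  refine ⟨L1 + L2 + B * B, fun n hn x y => ?_⟩
  obtain ⟨a, ha1, haL, hca⟩ := hL1 x
  obtain ⟨b, hb1, hbL, hcb⟩ := hL2 y
  have hk : B * B ≤ n - a - b := by omega
  have hck : Chn f δ (n - a - b) x₀ x₀ := hloop _ hk
  have htot : Chn f δ (a + ((n - a - b) + b)) x y := chn_trans hca (chn_trans hck hcb)
  have heq : a + ((n - a - b) + b) = n := by omega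
  rw [heq] at htot
  exact htot
end
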